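/- Let N_d and N_p be coprime positive integers. For all real numbers ΔΩ and ΔM, there exists a real number τ such that ΔΩ ≡ 2π N_d τ (mod 2π) and ΔM ≡ 2π N_p τ (mod 2π) if and only if N_p·ΔΩ − N_d·ΔM ≡ 0 (mod 2π). -/

import Mathlib

open Real

/-- Theorem 1 (retrograde frame): two positions lie on the same relative trajectory,
i.e. there is a normalized time `τ` with `ΔΩ ≡ 2π N_d τ` and `ΔM ≡ 2π N_p τ` (mod 2π),
iff `N_p ΔΩ - N_d ΔM ≡ 0 (mod 2π)`. -/
theorem same_relative_trajectory_retrograde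
    (Nd Np : ℕ) (hNd : 0 < Nd) (hNp : 0 < Np) (hcop : Nat.Coprime Nd Np) :
    ∀ ΔΩ ΔM : ℝ,
      (∃ τ : ℝ, (∃ k : ℤ, ΔΩ - 2 * π * Nd * τ = 2 * π * k) ∧
                (∃ k : ℤ, ΔM - 2 * π * Np * τ = 2 * π * k)) ↔
      (∃ k : ℤ, Np * ΔΩ - Nd * ΔM = 2 * π * k) := by
  intro ΔΩ ΔM
  constructor
  · rintro ⟨τ, ⟨k1, h1⟩, ⟨k2, h2⟩⟩
    refine ⟨(Np : ℤ) * k1 - (Nd : ℤ) * k2, ?_⟩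
    have e1 : ΔΩ = 2 * π * Nd * τ + 2 * π * k1 := by linarith
    have e2 : ΔM = 2 * π * Np * τ + 2 * π * k2 := by linarith
    rw [e1, e2]
    push_cast
    ring
  · rintro ⟨k, hk⟩
    set a : ℤ := Int.gcdA Nd Np
    set b : ℤ := Int.gcdB Nd Np
    have hbez : (Nd : ℤ) * a + (Np : ℤ) * b = 1 := by
      have := Int.gcd_eq_gcd_ab (Nd : ℤ) (Np : ℤ)
      have hg : Int.gcd (Nd : ℤ) (Np : ℤ) = 1 := by
        rwa [Int.gcd_natCast_natCast]
      rw [hg] at this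
      exact this.symm
    refine ⟨(a * ΔΩ + b * ΔM) / (2 * π), ⟨b * k, ?_⟩, ⟨-(a * k), ?_⟩⟩
    · have hπ : (2 : ℝ) * π ≠ 0 := by positivity
      field_simp
      push_cast
      have hbez' : ((Nd : ℝ)) * (a : ℝ) + ((Np : ℝ)) * (b : ℝ) = 1 := by
        exact_mod_cast congrArg (fun z : ℤ => (z : ℝ)) hbez
      linear_combination (b:ℝ)*hk - ΔΩ*hbez'
    · have hπ : (2 : ℝ) * π ≠ 0 := by positivity
      field_simp
      push_cast
      have hbez' : ((Nd : ℝ)) * (a : ℝ) + ((Np : ℝ)) * (b : ℝ) = 1 := by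
        exact_mod_cast congrArg (fun z : ℤ => (z : ℝ)) hbez
      linear_combination (-(a:ℝ))*hk - ΔM*hbez'
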